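/- arXiv:2104.14775 — 4 statements merged into one kernel-verified Lean document; each statement's English description precedes it below -/
import Mathlib

section
/- Let H = (V, 𝓗) be a connected hypergraph and μ a probability measure with full support on V such that for every independent set I of H, μ(I) ≤ Σ_{H ∈ 𝓗} |H ∩ I| · min_{k ∈ H} μ(k). Then for every subset B ⊆ V (not necessarily independent), μ(B) ≤ Σ_{H ∈ 𝓗} |H ∩ B| · min_{k ∈ H} μ(k). -/
/-- For a connected hypergraph and a full-support probability measure `μ`,
if `μ(I) ≤ Σ_H |H ∩ I| · min_H μ` for every independent set `I`, then the same
inequality holds for every subset `B ⊆ V`. -/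
theorem stmt_1 {V : Type*} [Fintype V] [DecidableEq V]
    (𝓗 : Finset (Finset V))
    (hne : ∀ H ∈ 𝓗, H.Nonempty)
    (hcover : ∀ v : V, ∃ H ∈ 𝓗, v ∈ H)
    (hconn : ∀ H ∈ 𝓗, ∀ H' ∈ 𝓗,
      Relation.ReflTransGen (fun A B => A ∈ 𝓗 ∧ B ∈ 𝓗 ∧ (A ∩ B).Nonempty) H H')
    (μ : V → ℝ) (hpos : ∀ v, 0 < μ v) (hsum : ∑ v, μ v = 1)
    (hI : ∀ I : Finset V, (∀ H ∈ 𝓗, ¬ H ⊆ I) →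
      ∑ v ∈ I, μ v ≤ ∑ H ∈ 𝓗, ((H ∩ I).card : ℝ) * sInf (μ '' ↑H)) :
    ∀ B : Finset V,
      ∑ v ∈ B, μ v ≤ ∑ H ∈ 𝓗, ((H ∩ B).card : ℝ) * sInf (μ '' ↑H) := by
  -- basic facts about the minima
  have hmin : ∀ H ∈ 𝓗, ∃ k ∈ H, μ k = sInf (μ '' ↑H) := by
    intro H hH
    have hne' : (H.image μ).Nonempty := (hne H hH).image μ
    have : sInf (μ '' ↑H) = (H.image μ).min' hne' := by
      rw [← Finset.coe_image, Finset.Nonempty.csInf_eq_min']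
    obtain ⟨k, hk, hk'⟩ := Finset.mem_image.mp ((H.image μ).min'_mem hne')
    exact ⟨k, hk, by rw [this, hk']⟩
  have hpos' : ∀ H ∈ 𝓗, 0 < sInf (μ '' ↑H) := by
    intro H hH
    obtain ⟨k, _, hk⟩ := hmin H hH
    exact hk ▸ hpos k
  intro B
  induction B using Finset.strongInductionOn with
  | _ B ih =>
    by_cases hind : ∀ H ∈ 𝓗, ¬ H ⊆ B
    · exact hI B hind
    · push_neg at hind
      obtain ⟨H0, hH0, hsub⟩ := hind
      obtain ⟨k, hkH0, hk⟩ := hmin H0 hH0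
      have hkB : k ∈ B := hsub hkH0
      set B' := B.erase k with hB'
      have IH := ih B' (Finset.erase_ssubset hkB)
      have hL : ∑ v ∈ B, μ v = μ k + ∑ v ∈ B', μ v :=
        (Finset.add_sum_erase B μ hkB).symm
      have hR : ∑ H ∈ 𝓗, ((H ∩ B').card : ℝ) * sInf (μ '' ↑H) + μ k ≤
          ∑ H ∈ 𝓗, ((H ∩ B).card : ℝ) * sInf (μ '' ↑H) := by
        have hterm : ∀ H ∈ 𝓗,
            ((H ∩ B').card : ℝ) * sInf (μ '' ↑H)
              + (if H = H0 then μ k else 0)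
            ≤ ((H ∩ B).card : ℝ) * sInf (μ '' ↑H) := by
          intro H hH
          have hcard : (H ∩ B') ⊆ (H ∩ B) :=
            Finset.inter_subset_inter le_rfl (Finset.erase_subset k B)
          by_cases hHH : H = H0
          · subst hHH
            simp only [if_pos rfl]
            have hk0 : k ∈ H ∩ B := Finset.mem_inter.mpr ⟨hkH0, hkB⟩
            have : H ∩ B' = (H ∩ B).erase k := Finset.inter_erase k H B
            rw [this, hk, Finset.card_erase_of_mem hk0]
            have hc : 1 ≤ (H ∩ B).card := Finset.card_pos.mpr ⟨k, hk0⟩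
            have : (((H ∩ B).card - 1 : ℕ) : ℝ) = ((H ∩ B).card : ℝ) - 1 := by
              push_cast [hc]; ring
            rw [this]; simp; ring_nf; simp
          · simp only [if_neg hHH, add_zero]
            exact mul_le_mul_of_nonneg_right
              (by exact_mod_cast Finset.card_le_card hcard)
              (hpos' H hH).le
        calc ∑ H ∈ 𝓗, ((H ∩ B').card : ℝ) * sInf (μ '' ↑H) + μ k
            = ∑ H ∈ 𝓗, (((H ∩ B').card : ℝ) * sInf (μ '' ↑H)
                + (if H = H0 then μ k else 0)) := by
              rw [Finset.sum_add_distrib, Finset.sum_ite_eq' 𝓗 H0 (fun _ => μ k),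
                if_pos hH0]
          _ ≤ ∑ H ∈ 𝓗, ((H ∩ B).card : ℝ) * sInf (μ '' ↑H) :=
              Finset.sum_le_sum hterm
      rw [hL]
      linarith
end

section
/- Let V be a finite set of cardinality q and μ a probability measure with full support on V satisfying μ_min / μ_max > (⌊(q+1)/2⌋ − 1) / ⌊(q+1)/2⌋, where μ_min = min_{i∈V} μ(i) and μ_max = max_{i∈V} μ(i). Then μ is strictly monotone with respect to cardinality: for all E, F ⊆ V, |E| < |F| implies μ(E) < μ(F). -/
/-- If a full-support probability measure on a finite set of cardinality
`q` satisfies `μ_min/μ_max > (⌊(q+1)/2⌋ − 1)/⌊(q+1)/2⌋`, then `μ` is strictly monotone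
with respect to cardinality: `|E| < |F| → μ(E) < μ(F)`. -/
theorem stmt_6 {V : Type*} [Fintype V] [Nonempty V]
    (μ : V → ℝ) (hpos : ∀ v, 0 < μ v) (hsum : ∑ v, μ v = 1)
    (h : (Finset.univ.inf' Finset.univ_nonempty μ) /
          (Finset.univ.sup' Finset.univ_nonempty μ) >
        ((((Fintype.card V + 1)/2 : ℕ) : ℝ) - 1) / (((Fintype.card V + 1)/2 : ℕ) : ℝ)) :
    ∀ E F : Finset V, E.card < F.card → ∑ v ∈ E, μ v < ∑ v ∈ F, μ v := by
  classical
  intro E F hcard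
  set m := Finset.univ.inf' Finset.univ_nonempty μ with hm
  set M := Finset.univ.sup' Finset.univ_nonempty μ with hM
  set q := Fintype.card V with hqdef
  set t : ℕ := (q + 1)/2 with ht
  have hq : 1 ≤ q := Fintype.card_pos
  have ht1 : 1 ≤ t := by omega
  have hmpos : 0 < m := by
    obtain ⟨v, _, hv⟩ := Finset.exists_mem_eq_inf' Finset.univ_nonempty μ
    rw [hm, hv]; exact hpos v
  have hmM : m ≤ M := by
    have v := Classical.arbitrary V
    exact le_trans (Finset.inf'_le _ (Finset.mem_univ v)) (Finset.le_sup' _ (Finset.mem_univ v))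
  have hMpos : 0 < M := lt_of_lt_of_le hmpos hmM
  have hkey : ((t:ℝ)-1) * M < t * m := by
    rw [gt_iff_lt, div_lt_div_iff₀ (by positivity) hMpos] at h
    linarith
  have hj : ∀ j : ℕ, j ≤ t → ((j:ℝ)-1) * M < j * m := by
    intro j hjt
    have hjt' : (j:ℝ) ≤ t := by exact_mod_cast hjt
    nlinarith
  have lower : ∀ S : Finset V, (S.card : ℝ) * m ≤ ∑ v ∈ S, μ v := by
    intro S
    calc (S.card : ℝ) * m = ∑ _v ∈ S, m := by rw [Finset.sum_const]; ring
    _ ≤ ∑ v ∈ S, μ v := Finset.sum_le_sum fun v _ => Finset.inf'_le _ (Finset.mem_univ v)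
  have upper : ∀ S : Finset V, ∑ v ∈ S, μ v ≤ (S.card : ℝ) * M := by
    intro S
    calc ∑ v ∈ S, μ v ≤ ∑ _v ∈ S, M :=
      Finset.sum_le_sum fun v _ => Finset.le_sup' _ (Finset.mem_univ v)
    _ = (S.card : ℝ) * M := by rw [Finset.sum_const]; ring
  have hFq : F.card ≤ q := Finset.card_le_univ F
  by_cases hk : F.card ≤ t
  · have h1 := upper E
    have h2 := lower F
    have h3 := hj F.card hk
    have hEk : (E.card : ℝ) ≤ (F.card : ℝ) - 1 := by
      have : (E.card : ℝ) + 1 ≤ F.card := by exact_mod_cast hcard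
      linarith
    nlinarith
  · have hcE : ∑ v ∈ Eᶜ, μ v = 1 - ∑ v ∈ E, μ v := by
      have h0 := Finset.sum_add_sum_compl E μ
      rw [hsum] at h0; linarith
    have hcF : ∑ v ∈ Fᶜ, μ v = 1 - ∑ v ∈ F, μ v := by
      have h0 := Finset.sum_add_sum_compl F μ
      rw [hsum] at h0; linarith
    set j : ℕ := q - F.card + 1 with hjdef
    have hjt : j ≤ t := by omega
    have h3 := hj j hjt
    have h1 : ∑ v ∈ Fᶜ, μ v ≤ ((j:ℝ) - 1) * M := by
      have := upper Fᶜ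
      have hc : (Fᶜ.card : ℝ) = (j:ℝ) - 1 := by
        have hFc : Fᶜ.card = q - F.card := Finset.card_compl F
        rw [hFc, hjdef]
        push_cast [Nat.cast_sub hFq]
        ring
      rw [hc] at this; exact this
    have h2 : (j : ℝ) * m ≤ ∑ v ∈ Eᶜ, μ v := by
      have hEc : j ≤ Eᶜ.card := by
        rw [Finset.card_compl]
        have := Finset.card_le_univ E
        omega
      have hEc' : (j : ℝ) ≤ Eᶜ.card := by exact_mod_cast hEc
      have := lower Eᶜ
      nlinarith
    linarith
end

section
/- Let 0 < α < 1/3 and consider the drift vectors Δ = (3α−1, 3α−1) (interior), Δ' = (α, 1−α) (first axis), Δ'' = (1−α, α) (second axis). Set u = (1−3α)/2 > 0. Then for any w with 3α−1 < w < (3α−1)α/(1−α), the quadratic form Q(x,y) = u x² + u y² + w x y is positive definite (i.e., 4u² > w²) and the four inequalities 2uΔ_x + wΔ_y < 0, 2uΔ_y + wΔ_x < 0, 2uΔ'_x + wΔ'_y < 0, 2uΔ''_y + wΔ''_x < 0 all hold. -/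
/-- Lyapunov quadratic form for the complete 3-uniform hypergraph. For
`0 < α < 1/3`, `u = (1−3α)/2` and `3α−1 < w < (3α−1)α/(1−α)`, the form
`Q(x,y) = ux² + uy² + wxy` is positive definite (`4u² > w²`) and the four drift
inequalities hold. -/
theorem stmt_15 (α w u : ℝ) (hα0 : 0 < α) (hα : α < 1/3)
    (hu : u = (1 - 3*α)/2)
    (hw1 : 3*α - 1 < w) (hw2 : w < (3*α - 1)*α/(1 - α)) :
    0 < u ∧
    4*u^2 > w^2 ∧
    2*u*(3*α - 1) + w*(3*α - 1) < 0 ∧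
    2*u*(3*α - 1) + w*(3*α - 1) < 0 ∧
    2*u*α + w*(1 - α) < 0 ∧
    2*u*α + w*(1 - α) < 0 := by
  have h1a : (0:ℝ) < 1 - α := by linarith
  have hw2' : w * (1 - α) < (3*α - 1) * α := (lt_div_iff₀ h1a).mp hw2
  have hwneg : w < 0 := by nlinarith
  refine ⟨by linarith, by nlinarith, by nlinarith, by nlinarith, by nlinarith, by nlinarith⟩
end

section
/- Let λ₁, λ₂, λ₃, λ₄ > 0 and define α = [(λ₂)² − (λ₃−λ₄)²] / [λ₂(λ₂+λ₃+λ₄)]. There exist arrival rates λ satisfying the conditions λ₁ < λ₂, λ₁ + λ₃ < λ₂ + λ₄, λ₁ + λ₄ < λ₂ + λ₃ but with λ₁ ≥ α·λ₂. Concretely, for any 0 < ε ≤ 2/5, the choice λ₁ = ε/2, λ₂ = ε, λ₃ = λ₄ = 1/2 − 3ε/4 satisfies all three strict inequalities yet λ₁ − α·λ₂ = ε/2 − 2ε²/(2−ε) ≥ 0. -/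
/-- a witness showing that the stability region
`{λ₁ < α·λ₂} ∩ Ncond_C(G)` is strictly contained in `Ncond_C(G)` for the pendant
graph with a self-loop on vertex 2: for any `0 < ε ≤ 2/5`, the rates
`λ₁ = ε/2, λ₂ = ε, λ₃ = λ₄ = 1/2 − 3ε/4` satisfy the three strict inequalities of
`Ncond_C(G)` yet `λ₁ ≥ α·λ₂`, with `λ₁ − α·λ₂ = ε/2 − 2ε²/(2−ε)`. -/
theorem stmt_18 (ε l1 l2 l3 l4 α : ℝ) (hε0 : 0 < ε) (hε : ε ≤ 2/5)
    (h1 : l1 = ε/2) (h2 : l2 = ε)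
    (h3 : l3 = 1/2 - 3*ε/4) (h4 : l4 = 1/2 - 3*ε/4)
    (hα : α = (l2^2 - (l3 - l4)^2) / (l2*(l2 + l3 + l4))) :
    l1 < l2 ∧ l1 + l3 < l2 + l4 ∧ l1 + l4 < l2 + l3 ∧
      α*l2 ≤ l1 ∧ l1 - α*l2 = ε/2 - 2*ε^2/(2 - ε) := by
  subst hα
  rw [h1,h2,h3,h4]
  have hd : ε * (ε + (1/2 - 3*ε/4) + (1/2 - 3*ε/4)) = ε * (1 - ε/2) := by ring
  have h2e : (0:ℝ) < 2 - ε := by linarith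
  have h1e : (0:ℝ) < 1 - ε/2 := by linarith
  have hαval : (ε^2 - ((1/2 - 3*ε/4) - (1/2 - 3*ε/4))^2) /
      (ε*(ε + (1/2 - 3*ε/4) + (1/2 - 3*ε/4))) = 2*ε/(2-ε) := by
    rw [hd]
    field_simp
    ring
  rw [hαval]
  refine ⟨by linarith, by linarith, by linarith, ?_, ?_⟩
  · rw [div_mul_eq_mul_div, div_le_iff₀ h2e]
    nlinarith
  · field_simp
end
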